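/- For every integer b ≥ 2 there exists a constant c_b > 0, depending only on b, such that for every ε > 0 there exists N₀ with the following property: for every integer N ≥ N₀, the number of integers n with 1 ≤ n ≤ N for which some digit d ∈ {0, 1, …, b − 1} satisfies |(number of occurrences of d in the base-b representation of n)/(number of base-b digits of n) − 1/b| ≥ ε is at most N^{1 − c_b ε²}. -/

import Mathlib

open Finset Real

/-- digit extraction formula for counts -/
private lemma count_digits_eq {b : ℕ} (hb : 1 < b) (d : ℕ) (n : ℕ) :
    (Nat.digits b n).count d =
      ((Finset.range (Nat.digits b n).length).filter (fun i => n / b ^ i % b = d)).card := by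
  induction n using Nat.strong_induction_on with
  | _ n ih =>
    rcases Nat.eq_zero_or_pos n with rfl | hn
    · simp
    · have hlt : n / b < n := Nat.div_lt_self hn hb
      rw [Nat.digits_def' hb hn, List.count_cons, ih _ hlt]
      simp only [List.length_cons, Finset.card_filter, Finset.sum_range_succ']
      congr 1
      · apply Finset.sum_congr rfl
        intro i _
        have : n / b ^ (i + 1) = n / b / b ^ i := by
          rw [Nat.div_div_eq_div_mul, pow_succ']
        rw [this]
      · rw [pow_zero, Nat.div_one]
        by_cases h : n % b = d
        · simp [h]
        · simp [h, Ne.symm h]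

private lemma digits_inj {b : ℕ} (hb : 1 < b) :
    ∀ (k n m : ℕ), n < b ^ k → m < b ^ k →
      (∀ i < k, n / b ^ i % b = m / b ^ i % b) → n = m := by
  intro k
  induction k with
  | zero => intro n m hn hm _; simp at hn hm; omega
  | succ k ih =>
    intro n m hn hm h
    have hb0 : 0 < b := by omega
    have h0 := h 0 (by omega)
    simp at h0
    have h1 : n / b = m / b := by
      apply ih
      · rw [Nat.div_lt_iff_lt_mul hb0]; rw [pow_succ] at hn; exact hn
      · rw [Nat.div_lt_iff_lt_mul hb0]; rw [pow_succ] at hm; exact hm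
      · intro i hi
        have := h (i + 1) (by omega)
        simp only [Nat.div_div_eq_div_mul, ← pow_succ']
        exact this
    have e1 := Nat.div_add_mod n b
    have e2 := Nat.div_add_mod m b
    rw [h0, h1] at e1
    exact e1.symm.trans e2

private lemma sum_exp_count {b : ℕ} (k d : ℕ) (hd : d < b) (t : ℝ) :
    ∑ f : Fin k → Fin b, Real.exp (t * ((Finset.univ.filter (fun i => ((f i : ℕ) = d))).card : ℝ))
      = (Real.exp t - 1 + b) ^ k := by
  have hb0 : 0 < b := by omega
  classical
  have step1 : ∀ f : Fin k → Fin b,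
      Real.exp (t * ((Finset.univ.filter (fun i => ((f i : ℕ) = d))).card : ℝ))
        = ∏ i : Fin k, (if ((f i : ℕ) = d) then Real.exp t else 1) := by
    intro f
    rw [mul_comm, Real.exp_nat_mul, ← Finset.prod_const, Finset.prod_filter]
  simp_rw [step1]
  have step2 : ∀ v : Fin b, (if ((v : ℕ) = d) then Real.exp t else 1)
      = (if v = (⟨d, hd⟩ : Fin b) then Real.exp t - 1 else 0) + 1 := by
    intro v
    by_cases h : (v : ℕ) = d
    · have : v = (⟨d, hd⟩ : Fin b) := Fin.ext h
      simp [h, this]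
    · have : v ≠ (⟨d, hd⟩ : Fin b) := fun hc => h (by rw [hc])
      simp [h, this]
  have step3 : ∑ v : Fin b, (if ((v : ℕ) = d) then Real.exp t else 1) = Real.exp t - 1 + b := by
    simp_rw [step2]
    rw [Finset.sum_add_distrib, Finset.sum_ite_eq' Finset.univ (⟨d, hd⟩ : Fin b)]
    simp
  calc ∑ f : Fin k → Fin b, ∏ i : Fin k, (if ((f i : ℕ) = d) then Real.exp t else 1)
      = ∏ _i : Fin k, ∑ v : Fin b, (if ((v : ℕ) = d) then Real.exp t else 1) := by
        rw [Finset.prod_univ_sum]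
        rw [Fintype.piFinset_univ]
    _ = (Real.exp t - 1 + b) ^ k := by rw [step3]; simp

private lemma tail_upper {b : ℕ} (k d : ℕ) (hd : d < b) (t m : ℝ) (ht : 0 < t) :
    ((Finset.univ.filter (fun f : Fin k → Fin b =>
        m ≤ ((Finset.univ.filter (fun i => ((f i : ℕ) = d))).card : ℝ))).card : ℝ)
      ≤ Real.exp (-(t * m)) * ∑ f : Fin k → Fin b,
          Real.exp (t * ((Finset.univ.filter (fun i => ((f i : ℕ) = d))).card : ℝ)) := by
  classical
  set cnt : (Fin k → Fin b) → ℝ :=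
    fun f => ((Finset.univ.filter (fun i => ((f i : ℕ) = d))).card : ℝ) with hcnt
  calc ((Finset.univ.filter (fun f : Fin k → Fin b => m ≤ cnt f)).card : ℝ)
      = ∑ f ∈ Finset.univ.filter (fun f : Fin k → Fin b => m ≤ cnt f), (1 : ℝ) := by simp
    _ ≤ ∑ f ∈ Finset.univ.filter (fun f : Fin k → Fin b => m ≤ cnt f),
          Real.exp (t * cnt f - t * m) := by
        apply Finset.sum_le_sum
        intro f hf
        rw [Finset.mem_filter] at hf
        apply Real.one_le_exp
        have := mul_le_mul_of_nonneg_left hf.2 ht.le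
        linarith
    _ ≤ ∑ f : Fin k → Fin b, Real.exp (t * cnt f - t * m) := by
        apply Finset.sum_le_sum_of_subset_of_nonneg (Finset.filter_subset _ _)
        intro f _ _
        exact (Real.exp_pos _).le
    _ = Real.exp (-(t * m)) * ∑ f : Fin k → Fin b, Real.exp (t * cnt f) := by
        rw [Finset.mul_sum]
        apply Finset.sum_congr rfl
        intro f _
        rw [← Real.exp_add]
        ring_nf

private lemma tail_lower {b : ℕ} (k d : ℕ) (hd : d < b) (t m : ℝ) (ht : 0 < t) :
    ((Finset.univ.filter (fun f : Fin k → Fin b =>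
        ((Finset.univ.filter (fun i => ((f i : ℕ) = d))).card : ℝ) ≤ m)).card : ℝ)
      ≤ Real.exp (t * m) * ∑ f : Fin k → Fin b,
          Real.exp (-t * ((Finset.univ.filter (fun i => ((f i : ℕ) = d))).card : ℝ)) := by
  classical
  set cnt : (Fin k → Fin b) → ℝ :=
    fun f => ((Finset.univ.filter (fun i => ((f i : ℕ) = d))).card : ℝ) with hcnt
  calc ((Finset.univ.filter (fun f : Fin k → Fin b => cnt f ≤ m)).card : ℝ)
      = ∑ f ∈ Finset.univ.filter (fun f : Fin k → Fin b => cnt f ≤ m), (1 : ℝ) := by simp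
    _ ≤ ∑ f ∈ Finset.univ.filter (fun f : Fin k → Fin b => cnt f ≤ m),
          Real.exp (t * m - t * cnt f) := by
        apply Finset.sum_le_sum
        intro f hf
        rw [Finset.mem_filter] at hf
        apply Real.one_le_exp
        have := mul_le_mul_of_nonneg_left hf.2 ht.le
        linarith
    _ ≤ ∑ f : Fin k → Fin b, Real.exp (t * m - t * cnt f) := by
        apply Finset.sum_le_sum_of_subset_of_nonneg (Finset.filter_subset _ _)
        intro f _ _
        exact (Real.exp_pos _).le
    _ = Real.exp (t * m) * ∑ f : Fin k → Fin b, Real.exp (-t * cnt f) := by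
        rw [Finset.mul_sum]
        apply Finset.sum_congr rfl
        intro f _
        rw [← Real.exp_add]
        ring_nf

private lemma exp_quad_bound {t : ℝ} (ht : |t| ≤ 1) : Real.exp t ≤ 1 + t + t ^ 2 := by
  have h := Real.exp_bound ht (n := 3) (by norm_num)
  have hsum : ∑ m ∈ Finset.range 3, t ^ m / m.factorial = 1 + t + t ^ 2 / 2 := by
    simp [Finset.sum_range_succ, Nat.factorial]
  rw [hsum] at h
  norm_num [Nat.factorial] at h
  have h3 : |t| ^ 3 ≤ t ^ 2 := by
    have : |t| ^ 3 = |t| * |t| ^ 2 := by ring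
    rw [this, sq_abs]
    nlinarith [abs_nonneg t, sq_nonneg t]
  have h4 := (abs_sub_le_iff.mp h).1
  nlinarith

private lemma mgf_base_bound {b : ℕ} (hb : 2 ≤ b) {t : ℝ} (ht : |t| ≤ 1) :
    Real.exp t - 1 + b ≤ b * Real.exp (t / b + t ^ 2) := by
  have hb0 : (0 : ℝ) < b := by positivity
  have hb1 : (1 : ℝ) ≤ b := by exact_mod_cast Nat.one_le_of_lt hb
  have h1 : Real.exp t ≤ 1 + t + t ^ 2 := exp_quad_bound ht
  have h2 : 1 + (t / b + t ^ 2) ≤ Real.exp (t / b + t ^ 2) := by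
    linarith [Real.add_one_le_exp (t / b + t ^ 2)]
  have h3 : (b : ℝ) * (1 + (t / b + t ^ 2)) ≤ b * Real.exp (t / b + t ^ 2) :=
    mul_le_mul_of_nonneg_left h2 hb0.le
  have h4 : (b : ℝ) * (1 + (t / b + t ^ 2)) = b + t + b * t ^ 2 := by
    field_simp
    ring
  nlinarith [sq_nonneg t]

private lemma strings_upper {b k d : ℕ} (hb : 2 ≤ b) (hd : d < b) {ε : ℝ} (hε : 0 < ε)
    (hε1 : ε ≤ 1) :
    ((Finset.univ.filter (fun f : Fin k → Fin b =>
        (k : ℝ) * (1 / b + ε) ≤ ((Finset.univ.filter (fun i => ((f i : ℕ) = d))).card : ℝ))).card : ℝ)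
      ≤ (b : ℝ) ^ k * Real.exp (-(k * ε ^ 2 / 4)) := by
  have ht : 0 < ε / 2 := by linarith
  have habs : |ε / 2| ≤ 1 := by rw [abs_of_pos ht]; linarith
  have hb0 : (0 : ℝ) < b := by have : (2:ℝ) ≤ b := by exact_mod_cast hb
                               linarith
  have h1 := tail_upper k d hd (ε / 2) ((k : ℝ) * (1 / b + ε)) ht
  rw [sum_exp_count k d hd] at h1
  have h2 : Real.exp (ε / 2) - 1 + b ≤ b * Real.exp ((ε / 2) / b + (ε / 2) ^ 2) :=
    mgf_base_bound hb habs
  have h2' : (0 : ℝ) ≤ Real.exp (ε / 2) - 1 + b := by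
    have := Real.exp_pos (ε / 2)
    have hb2 : (2 : ℝ) ≤ b := by exact_mod_cast hb
    linarith
  have h3 : (Real.exp (ε / 2) - 1 + b) ^ k ≤ (b * Real.exp ((ε / 2) / b + (ε / 2) ^ 2)) ^ k :=
    pow_le_pow_left₀ h2' h2 k
  have key : Real.exp (-(ε / 2 * ((k : ℝ) * (1 / b + ε))))
        * ((b : ℝ) * Real.exp ((ε / 2) / b + (ε / 2) ^ 2)) ^ k
      = (b : ℝ) ^ k * Real.exp (-(k * ε ^ 2 / 4)) := by
    rw [mul_pow, ← Real.exp_nat_mul, mul_comm ((b : ℝ) ^ k), ← mul_assoc, ← Real.exp_add,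
      mul_comm]
    congr 1
    ring
  calc ((Finset.univ.filter (fun f : Fin k → Fin b =>
        (k : ℝ) * (1 / b + ε) ≤ ((Finset.univ.filter (fun i => ((f i : ℕ) = d))).card : ℝ))).card : ℝ)
      ≤ Real.exp (-(ε / 2 * ((k : ℝ) * (1 / b + ε)))) * (Real.exp (ε / 2) - 1 + b) ^ k := h1
    _ ≤ Real.exp (-(ε / 2 * ((k : ℝ) * (1 / b + ε))))
          * ((b : ℝ) * Real.exp ((ε / 2) / b + (ε / 2) ^ 2)) ^ k :=
        mul_le_mul_of_nonneg_left h3 (Real.exp_pos _).le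
    _ = (b : ℝ) ^ k * Real.exp (-(k * ε ^ 2 / 4)) := key

private lemma strings_lower {b k d : ℕ} (hb : 2 ≤ b) (hd : d < b) {ε : ℝ} (hε : 0 < ε)
    (hε1 : ε ≤ 1) :
    ((Finset.univ.filter (fun f : Fin k → Fin b =>
        ((Finset.univ.filter (fun i => ((f i : ℕ) = d))).card : ℝ) ≤ (k : ℝ) * (1 / b - ε))).card : ℝ)
      ≤ (b : ℝ) ^ k * Real.exp (-(k * ε ^ 2 / 4)) := by
  have ht : 0 < ε / 2 := by linarith
  have habs : |(-(ε / 2))| ≤ 1 := by rw [abs_neg, abs_of_pos ht]; linarith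
  have hb0 : (0 : ℝ) < b := by have : (2:ℝ) ≤ b := by exact_mod_cast hb
                               linarith
  have h1 := tail_lower k d hd (ε / 2) ((k : ℝ) * (1 / b - ε)) ht
  rw [show (-(ε / 2) : ℝ) = -(ε / 2) from rfl] at h1
  rw [sum_exp_count k d hd (-(ε / 2))] at h1
  have h2 : Real.exp (-(ε / 2)) - 1 + b ≤ b * Real.exp ((-(ε / 2)) / b + (-(ε / 2)) ^ 2) :=
    mgf_base_bound hb habs
  have h2' : (0 : ℝ) ≤ Real.exp (-(ε / 2)) - 1 + b := by
    have := Real.exp_pos (-(ε / 2))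
    have hb2 : (2 : ℝ) ≤ b := by exact_mod_cast hb
    linarith
  have h3 : (Real.exp (-(ε / 2)) - 1 + b) ^ k
      ≤ ((b : ℝ) * Real.exp ((-(ε / 2)) / b + (-(ε / 2)) ^ 2)) ^ k :=
    pow_le_pow_left₀ h2' h2 k
  have key : Real.exp (ε / 2 * ((k : ℝ) * (1 / b - ε)))
        * ((b : ℝ) * Real.exp ((-(ε / 2)) / b + (-(ε / 2)) ^ 2)) ^ k
      = (b : ℝ) ^ k * Real.exp (-(k * ε ^ 2 / 4)) := by
    rw [mul_pow, ← Real.exp_nat_mul, mul_comm ((b : ℝ) ^ k), ← mul_assoc, ← Real.exp_add,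
      mul_comm]
    congr 1
    ring
  calc ((Finset.univ.filter (fun f : Fin k → Fin b =>
        ((Finset.univ.filter (fun i => ((f i : ℕ) = d))).card : ℝ) ≤ (k : ℝ) * (1 / b - ε))).card : ℝ)
      ≤ Real.exp (ε / 2 * ((k : ℝ) * (1 / b - ε))) * (Real.exp (-(ε / 2)) - 1 + b) ^ k := h1
    _ ≤ Real.exp (ε / 2 * ((k : ℝ) * (1 / b - ε)))
          * ((b : ℝ) * Real.exp ((-(ε / 2)) / b + (-(ε / 2)) ^ 2)) ^ k :=
        mul_le_mul_of_nonneg_left h3 (Real.exp_pos _).le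
    _ = (b : ℝ) ^ k * Real.exp (-(k * ε ^ 2 / 4)) := key

open Classical in
private lemma level_bound {b : ℕ} (hb : 2 ≤ b) (d k N : ℕ) (hd : d < b) {ε : ℝ} (hε : 0 < ε)
    (hε1 : ε ≤ 1) :
    ((((Finset.Icc 1 N)).filter (fun n => (Nat.digits b n).length = k ∧
        ε ≤ |((Nat.digits b n).count d : ℝ) / ((Nat.digits b n).length : ℝ) - 1 / (b : ℝ)|)).card : ℝ)
      ≤ 2 * (b : ℝ) ^ k * Real.exp (-(k * ε ^ 2 / 4)) := by
  have hb1 : 1 < b := hb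
  have hb0 : 0 < b := by omega
  have hbR : (2 : ℝ) ≤ (b : ℝ) := by exact_mod_cast hb
  set S := ((Finset.Icc 1 N)).filter (fun n => (Nat.digits b n).length = k ∧
      ε ≤ |((Nat.digits b n).count d : ℝ) / ((Nat.digits b n).length : ℝ) - 1 / (b : ℝ)|) with hS
  set T := Finset.univ.filter (fun f : Fin k → Fin b =>
      ((k : ℝ) * (1 / b + ε) ≤ ((Finset.univ.filter (fun i => ((f i : ℕ) = d))).card : ℝ)) ∨
      (((Finset.univ.filter (fun i => ((f i : ℕ) = d))).card : ℝ) ≤ (k : ℝ) * (1 / b - ε)))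
    with hT
  have hcard : S.card ≤ T.card := by
    apply Finset.card_le_card_of_injOn
      (fun n => fun i : Fin k => (⟨n / b ^ (i : ℕ) % b, Nat.mod_lt _ hb0⟩ : Fin b))
    · intro n hn
      simp only [hS, Finset.mem_coe, Finset.mem_filter, Finset.mem_Icc] at hn
      obtain ⟨⟨hn1, hn2⟩, hlen, hdev⟩ := hn
      have hk : 0 < k := by
        rw [← hlen]
        exact List.length_pos_iff.mpr (Nat.digits_ne_nil_iff_ne_zero.mpr (by omega))
      have hkR : (0 : ℝ) < (k : ℝ) := by exact_mod_cast hk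
      have hcnt : (Nat.digits b n).count d
          = (Finset.univ.filter (fun i : Fin k =>
              ((((fun i : Fin k => (⟨n / b ^ (i : ℕ) % b, Nat.mod_lt _ hb0⟩ : Fin b)) i) : ℕ) = d))).card := by
        rw [count_digits_eq hb1 d n, hlen]
        rw [Finset.card_filter, Finset.card_filter, ← Fin.sum_univ_eq_sum_range
          (f := fun i => if n / b ^ i % b = d then 1 else 0)]
      rw [hT, Finset.mem_coe, Finset.mem_filter]
      refine ⟨Finset.mem_univ _, ?_⟩
      rw [hlen] at hdev
      rw [← hcnt]
      rcases le_abs.mp hdev with h | h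
      · left
        have : (1 / (b : ℝ) + ε) ≤ ((Nat.digits b n).count d : ℝ) / (k : ℝ) := by linarith
        calc (k : ℝ) * (1 / b + ε) ≤ (k : ℝ) * (((Nat.digits b n).count d : ℝ) / (k : ℝ)) :=
              mul_le_mul_of_nonneg_left this hkR.le
          _ = ((Nat.digits b n).count d : ℝ) := by field_simp
      · right
        have : ((Nat.digits b n).count d : ℝ) / (k : ℝ) ≤ (1 / (b : ℝ) - ε) := by linarith
        calc ((Nat.digits b n).count d : ℝ)
            = (k : ℝ) * (((Nat.digits b n).count d : ℝ) / (k : ℝ)) := by field_simp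
          _ ≤ (k : ℝ) * (1 / b - ε) := mul_le_mul_of_nonneg_left this hkR.le
    · intro n hn m hm heq
      rw [Finset.mem_coe, hS, Finset.mem_filter] at hn hm
      have hnk : n < b ^ k := by
        rw [← hn.2.1]; exact Nat.lt_base_pow_length_digits hb1
      have hmk : m < b ^ k := by
        rw [← hm.2.1]; exact Nat.lt_base_pow_length_digits hb1
      apply digits_inj hb1 k n m hnk hmk
      intro i hi
      have := congrFun heq ⟨i, hi⟩
      exact congrArg Fin.val this
  have hsplit : (T.card : ℝ)
      ≤ (b : ℝ) ^ k * Real.exp (-(k * ε ^ 2 / 4)) + (b : ℝ) ^ k * Real.exp (-(k * ε ^ 2 / 4)) := by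
    rw [hT, Finset.filter_or]
    calc ((Finset.univ.filter (fun f : Fin k → Fin b =>
          (k : ℝ) * (1 / b + ε) ≤ ((Finset.univ.filter (fun i => ((f i : ℕ) = d))).card : ℝ)) ∪
        Finset.univ.filter (fun f : Fin k → Fin b =>
          ((Finset.univ.filter (fun i => ((f i : ℕ) = d))).card : ℝ) ≤ (k : ℝ) * (1 / b - ε))).card : ℝ)
        ≤ ((Finset.univ.filter (fun f : Fin k → Fin b =>
            (k : ℝ) * (1 / b + ε) ≤ ((Finset.univ.filter (fun i => ((f i : ℕ) = d))).card : ℝ))).card : ℝ)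
          + ((Finset.univ.filter (fun f : Fin k → Fin b =>
            ((Finset.univ.filter (fun i => ((f i : ℕ) = d))).card : ℝ) ≤ (k : ℝ) * (1 / b - ε))).card : ℝ) := by
          exact_mod_cast Finset.card_union_le _ _
      _ ≤ (b : ℝ) ^ k * Real.exp (-(k * ε ^ 2 / 4)) + (b : ℝ) ^ k * Real.exp (-(k * ε ^ 2 / 4)) :=
          add_le_add (strings_upper hb hd hε hε1) (strings_lower hb hd hε hε1)
  have : (S.card : ℝ) ≤ (T.card : ℝ) := by exact_mod_cast hcard
  linarith

open Classical in
theorem stmt_5 (b : ℕ) (hb : 2 ≤ b) :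
    ∃ c : ℝ, 0 < c ∧ ∀ ε : ℝ, 0 < ε → ∃ N₀ : ℕ, ∀ N : ℕ, N₀ ≤ N →
      (((Finset.Icc 1 N).filter (fun n : ℕ =>
          ∃ d : ℕ, d < b ∧
            ε ≤ |((Nat.digits b n).count d : ℝ) / ((Nat.digits b n).length : ℝ)
                  - 1 / (b : ℝ)|)).card : ℝ)
        ≤ (N : ℝ) ^ ((1 : ℝ) - c * ε ^ 2) := by
  have hb1 : 1 < b := hb
  have hbR : (2 : ℝ) ≤ (b : ℝ) := by exact_mod_cast hb
  have hlogb : 0 < Real.log b := Real.log_pos (by exact_mod_cast hb1)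
  refine ⟨1 / (8 * Real.log b), by positivity, ?_⟩
  intro ε hε
  by_cases hε1 : ε ≤ 1
  · -- main case: ε ≤ 1
    set δ := ε ^ 2 / (8 * Real.log b) with hδ
    have hδpos : 0 < δ := by positivity
    have hlo := isLittleO_log_rpow_atTop hδpos
    have hev : ∀ᶠ x : ℝ in Filter.atTop, ‖Real.log x‖ ≤ 1 / (6 * (b : ℝ) ^ 2) * ‖x ^ δ‖ :=
      hlo.def (by positivity)
    have hev2 : ∀ᶠ N : ℕ in Filter.atTop,
        ‖Real.log (N : ℝ)‖ ≤ 1 / (6 * (b : ℝ) ^ 2) * ‖(N : ℝ) ^ δ‖ :=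
      tendsto_natCast_atTop_atTop.eventually hev
    have hev3 : ∀ᶠ N : ℕ in Filter.atTop, 3 ≤ N := Filter.eventually_ge_atTop 3
    obtain ⟨N₀, hN₀⟩ := Filter.eventually_atTop.mp (hev2.and hev3)
    refine ⟨N₀, fun N hN => ?_⟩
    obtain ⟨hnorm, hN3⟩ := hN₀ N hN
    have hN0 : N ≠ 0 := by omega
    have hNR : (0 : ℝ) < N := by
      have : 0 < N := by omega
      exact_mod_cast this
    set K := (Nat.digits b N).length with hK
    have hKpos : 0 < K := List.length_pos_iff.mpr (Nat.digits_ne_nil_iff_ne_zero.mpr hN0)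
    -- counting reduction
    have hsub : ((Finset.Icc 1 N).filter (fun n : ℕ =>
          ∃ d : ℕ, d < b ∧
            ε ≤ |((Nat.digits b n).count d : ℝ) / ((Nat.digits b n).length : ℝ)
                  - 1 / (b : ℝ)|))
        ⊆ (Finset.range b).biUnion (fun d => (Finset.Icc 1 K).biUnion (fun k =>
            ((Finset.Icc 1 N)).filter (fun n => (Nat.digits b n).length = k ∧
              ε ≤ |((Nat.digits b n).count d : ℝ) / ((Nat.digits b n).length : ℝ)
                - 1 / (b : ℝ)|))) := by
      intro n hn
      rw [Finset.mem_filter] at hn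
      obtain ⟨hmem, d, hd, hdev⟩ := hn
      have hn1 : 1 ≤ n := (Finset.mem_Icc.mp hmem).1
      have hn2 : n ≤ N := (Finset.mem_Icc.mp hmem).2
      have hlp : 0 < (Nat.digits b n).length :=
        List.length_pos_iff.mpr (Nat.digits_ne_nil_iff_ne_zero.mpr (by omega))
      have hlK : (Nat.digits b n).length ≤ K := Nat.le_digits_len_le b n N hn2
      rw [Finset.mem_biUnion]
      refine ⟨d, Finset.mem_range.mpr hd, ?_⟩
      rw [Finset.mem_biUnion]
      exact ⟨(Nat.digits b n).length, Finset.mem_Icc.mpr ⟨hlp, hlK⟩,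
        Finset.mem_filter.mpr ⟨hmem, rfl, hdev⟩⟩
    have hcount : (((Finset.Icc 1 N).filter (fun n : ℕ =>
          ∃ d : ℕ, d < b ∧
            ε ≤ |((Nat.digits b n).count d : ℝ) / ((Nat.digits b n).length : ℝ)
                  - 1 / (b : ℝ)|)).card : ℝ)
        ≤ ∑ d ∈ Finset.range b, ∑ k ∈ Finset.Icc 1 K,
            ((((Finset.Icc 1 N)).filter (fun n => (Nat.digits b n).length = k ∧
              ε ≤ |((Nat.digits b n).count d : ℝ) / ((Nat.digits b n).length : ℝ)
                - 1 / (b : ℝ)|)).card : ℝ) := by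
      have h1 := Finset.card_le_card hsub
      have h2 := Finset.card_biUnion_le (s := Finset.range b)
        (t := fun d => (Finset.Icc 1 K).biUnion (fun k =>
            ((Finset.Icc 1 N)).filter (fun n => (Nat.digits b n).length = k ∧
              ε ≤ |((Nat.digits b n).count d : ℝ) / ((Nat.digits b n).length : ℝ)
                - 1 / (b : ℝ)|)))
      have h3 : ∀ d, ((Finset.Icc 1 K).biUnion (fun k =>
            ((Finset.Icc 1 N)).filter (fun n => (Nat.digits b n).length = k ∧
              ε ≤ |((Nat.digits b n).count d : ℝ) / ((Nat.digits b n).length : ℝ)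
                - 1 / (b : ℝ)|))).card
          ≤ ∑ k ∈ Finset.Icc 1 K,
            (((Finset.Icc 1 N)).filter (fun n => (Nat.digits b n).length = k ∧
              ε ≤ |((Nat.digits b n).count d : ℝ) / ((Nat.digits b n).length : ℝ)
                - 1 / (b : ℝ)|)).card := fun d => Finset.card_biUnion_le
      have h4 := le_trans h1 (le_trans h2 (Finset.sum_le_sum (fun d _ => h3 d)))
      exact_mod_cast h4
    -- geometric bounds
    have hge1 : 1 ≤ (b : ℝ) * Real.exp (-(ε ^ 2 / 4)) := by
      have h2 : Real.exp (ε ^ 2 / 4) ≤ 2 := by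
        rw [show (2 : ℝ) = Real.exp (Real.log 2) from (Real.exp_log (by norm_num)).symm]
        apply Real.exp_le_exp.mpr
        nlinarith [Real.log_two_gt_d9]
      rw [Real.exp_neg, ← div_eq_mul_inv, le_div_iff₀ (Real.exp_pos _), one_mul]
      linarith
    have hrew : ∀ j : ℕ, (b : ℝ) ^ j * Real.exp (-(j * ε ^ 2 / 4))
        = ((b : ℝ) * Real.exp (-(ε ^ 2 / 4))) ^ j := by
      intro j
      rw [mul_pow, ← Real.exp_nat_mul]
      congr 2
      ring
    have hterm : ∀ k ∈ Finset.Icc 1 K, 2 * (b : ℝ) ^ k * Real.exp (-(k * ε ^ 2 / 4))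
        ≤ 2 * (b : ℝ) ^ K * Real.exp (-(K * ε ^ 2 / 4)) := by
      intro k hk
      have hkK : k ≤ K := (Finset.mem_Icc.mp hk).2
      rw [mul_assoc, mul_assoc, hrew k, hrew K]
      have := pow_le_pow_right₀ hge1 hkK
      linarith
    have hbK : ((b : ℝ)) ^ K ≤ (b : ℝ) * N := by
      have : (b : ℕ) ^ K ≤ b * N := Nat.base_pow_length_digits_le b N hb1 hN0
      exact_mod_cast this
    have hexp : Real.exp (-(K * ε ^ 2 / 4)) ≤ (N : ℝ) ^ (-(2 * δ)) := by
      rw [Real.rpow_def_of_pos hNR]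
      apply Real.exp_le_exp.mpr
      have hlogN : Real.log N ≤ K * Real.log b := by
        have hNb : (N : ℝ) ≤ (b : ℝ) ^ K := by
          exact_mod_cast (Nat.lt_base_pow_length_digits hb1 (m := N)).le
        calc Real.log N ≤ Real.log ((b : ℝ) ^ K) := Real.log_le_log hNR hNb
          _ = K * Real.log b := by rw [Real.log_pow]
      have h' : Real.log N / Real.log b ≤ K := by
        rw [div_le_iff₀ hlogb]; exact hlogN
      have h'' : Real.log N * (2 * δ) = (Real.log N / Real.log b) * (ε ^ 2 / 4) := by
        rw [hδ]; field_simp; ring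
      have hmain : Real.log N * (2 * δ) ≤ K * (ε ^ 2 / 4) := by
        rw [h'']
        exact mul_le_mul_of_nonneg_right h' (by positivity)
      linarith
    have hlogN0 : 0 ≤ Real.log N := Real.log_nonneg (by exact_mod_cast (by omega : 1 ≤ N))
    have hKbound : 2 * (b : ℝ) ^ 2 * K ≤ (N : ℝ) ^ δ := by
      have hKlog : K = Nat.log b N + 1 := by rw [hK]; exact Nat.digits_len b N hb1 hN0
      have h1 : (Nat.log b N : ℝ) ≤ Real.logb b N := Real.natLog_le_logb N b
      have hlog2 : (0.6931471803 : ℝ) < Real.log 2 := Real.log_two_gt_d9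
      have hlogN1 : 1 ≤ Real.log N := by
        have h3 : (3 : ℝ) ≤ N := by exact_mod_cast hN3
        have he3 : Real.exp 1 < 3 := lt_trans Real.exp_one_lt_d9 (by norm_num)
        calc (1 : ℝ) = Real.log (Real.exp 1) := (Real.log_exp 1).symm
          _ ≤ Real.log 3 := Real.log_le_log (Real.exp_pos 1) he3.le
          _ ≤ Real.log N := Real.log_le_log (by norm_num) h3
      have h2 : Real.logb b N ≤ Real.log N / Real.log 2 := by
        rw [Real.logb]
        apply div_le_div_of_nonneg_left hlogN0 (by linarith)
        linarith [Real.log_le_log (by norm_num : (0:ℝ) < 2) hbR]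
      have h4 : Real.log N / Real.log 2 ≤ 2 * Real.log N := by
        rw [div_le_iff₀ (by linarith : (0 : ℝ) < Real.log 2)]
        nlinarith
      have hKle : (K : ℝ) ≤ 3 * Real.log N := by
        rw [hKlog]
        push_cast
        linarith
      have hnn : ‖Real.log (N : ℝ)‖ = Real.log N := by
        rw [Real.norm_eq_abs, abs_of_nonneg hlogN0]
      have hrn : ‖(N : ℝ) ^ δ‖ = (N : ℝ) ^ δ := by
        rw [Real.norm_eq_abs, abs_of_nonneg (Real.rpow_nonneg hNR.le δ)]
      rw [hnn, hrn] at hnorm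
      have s1 : 2 * (b : ℝ) ^ 2 * K ≤ 2 * (b : ℝ) ^ 2 * (3 * Real.log N) :=
        mul_le_mul_of_nonneg_left hKle (by positivity)
      have s2 : 6 * (b : ℝ) ^ 2 * Real.log N
          ≤ 6 * (b : ℝ) ^ 2 * (1 / (6 * (b : ℝ) ^ 2) * (N : ℝ) ^ δ) :=
        mul_le_mul_of_nonneg_left hnorm (by positivity)
      have s3 : 6 * (b : ℝ) ^ 2 * (1 / (6 * (b : ℝ) ^ 2) * (N : ℝ) ^ δ) = (N : ℝ) ^ δ := by
        have : (b : ℝ) ≠ 0 := by linarith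
        field_simp
      linarith
    calc (((Finset.Icc 1 N).filter (fun n : ℕ =>
          ∃ d : ℕ, d < b ∧
            ε ≤ |((Nat.digits b n).count d : ℝ) / ((Nat.digits b n).length : ℝ)
                  - 1 / (b : ℝ)|)).card : ℝ)
        ≤ ∑ d ∈ Finset.range b, ∑ k ∈ Finset.Icc 1 K,
            ((((Finset.Icc 1 N)).filter (fun n => (Nat.digits b n).length = k ∧
              ε ≤ |((Nat.digits b n).count d : ℝ) / ((Nat.digits b n).length : ℝ)
                - 1 / (b : ℝ)|)).card : ℝ) := hcount
      _ ≤ ∑ d ∈ Finset.range b, ∑ k ∈ Finset.Icc 1 K,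
            2 * (b : ℝ) ^ k * Real.exp (-(k * ε ^ 2 / 4)) := by
          apply Finset.sum_le_sum
          intro d hd
          apply Finset.sum_le_sum
          intro k _
          exact level_bound hb d k N (Finset.mem_range.mp hd) hε hε1
      _ ≤ ∑ d ∈ Finset.range b, ∑ k ∈ Finset.Icc 1 K,
            2 * (b : ℝ) ^ K * Real.exp (-(K * ε ^ 2 / 4)) := by
          apply Finset.sum_le_sum
          intro d _
          exact Finset.sum_le_sum hterm
      _ = (2 * (b : ℝ) * K) * ((b : ℝ) ^ K * Real.exp (-(K * ε ^ 2 / 4))) := by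
          rw [Finset.sum_const, Finset.sum_const, Nat.card_Icc, Finset.card_range]
          simp
          ring
      _ ≤ (2 * (b : ℝ) * K) * (((b : ℝ) * N) * (N : ℝ) ^ (-(2 * δ))) := by
          apply mul_le_mul_of_nonneg_left
          · exact mul_le_mul hbK hexp (Real.exp_pos _).le (by positivity)
          · positivity
      _ = (2 * (b : ℝ) ^ 2 * K) * ((N : ℝ) * (N : ℝ) ^ (-(2 * δ))) := by ring
      _ ≤ (N : ℝ) ^ δ * ((N : ℝ) * (N : ℝ) ^ (-(2 * δ))) := by
          apply mul_le_mul_of_nonneg_right hKbound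
          positivity
      _ = (N : ℝ) ^ ((1 : ℝ) - 1 / (8 * Real.log b) * ε ^ 2) := by
          have e1 : (N : ℝ) * (N : ℝ) ^ (-(2 * δ)) = (N : ℝ) ^ (1 + -(2 * δ)) := by
            rw [Real.rpow_add hNR, Real.rpow_one]
          rw [e1, ← Real.rpow_add hNR]
          congr 1
          rw [hδ]
          field_simp
          ring
  · -- ε > 1 : the set is empty
    push_neg at hε1
    refine ⟨1, fun N _ => ?_⟩
    have hempty : (Finset.Icc 1 N).filter (fun n : ℕ =>
          ∃ d : ℕ, d < b ∧
            ε ≤ |((Nat.digits b n).count d : ℝ) / ((Nat.digits b n).length : ℝ)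
                  - 1 / (b : ℝ)|) = ∅ := by
      rw [Finset.filter_eq_empty_iff]
      intro n hn
      rw [Finset.mem_Icc] at hn
      rintro ⟨d, _, hdev⟩
      have hlp : 0 < (Nat.digits b n).length :=
        List.length_pos_iff.mpr (Nat.digits_ne_nil_iff_ne_zero.mpr (by omega))
      have hlR : (0 : ℝ) < ((Nat.digits b n).length : ℝ) := by exact_mod_cast hlp
      have hcl : ((Nat.digits b n).count d : ℝ) ≤ ((Nat.digits b n).length : ℝ) := by
        exact_mod_cast List.count_le_length
      have h1 : (0 : ℝ) ≤ ((Nat.digits b n).count d : ℝ) / ((Nat.digits b n).length : ℝ) := by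
        positivity
      have h2 : ((Nat.digits b n).count d : ℝ) / ((Nat.digits b n).length : ℝ) ≤ 1 :=
        (div_le_one hlR).mpr hcl
      have h3 : (0 : ℝ) < 1 / (b : ℝ) := by positivity
      have h4 : 1 / (b : ℝ) ≤ 1 := by
        rw [div_le_one (by linarith : (0:ℝ) < (b:ℝ))]
        linarith
      have habs : |((Nat.digits b n).count d : ℝ) / ((Nat.digits b n).length : ℝ)
          - 1 / (b : ℝ)| ≤ 1 := abs_le.mpr ⟨by linarith, by linarith⟩
      linarith
    rw [hempty]
    simp only [Finset.card_empty, Nat.cast_zero]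
    exact Real.rpow_nonneg (Nat.cast_nonneg N) _
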